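/- For every sufficiently large natural number n, the equation λ² + n²e^{−λ} = 0 has a complex root λ_n with Re(λ_n) → +∞ as n → ∞; more precisely, there exist roots λ_n = x_n + i y_n with x_n ∼ 2(ln(n/2) − ln ln(n/2)) as n → ∞. -/

import Mathlib

open Real Filter

noncomputable def Fth (θ : ℝ) : ℝ :=
  ((π - 2*θ) / Real.sin θ)^2 * Real.exp ((π - 2*θ) * Real.cos θ / Real.sin θ)

lemma exists_theta (n : ℕ) (hn : 2 ≤ n) :
    ∃ θ : ℝ, 0 < θ ∧ θ < π/2 ∧ Fth θ = (n:ℝ)^2 := by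
  have hπ := Real.pi_pos
  set a : ℝ := π / (2*n) with ha_def
  have hn' : (2:ℝ) ≤ (n:ℝ) := by exact_mod_cast hn
  have hnpos : (0:ℝ) < n := by linarith
  have ha : 0 < a := div_pos hπ (by positivity)
  have ha4 : a ≤ π/4 := by
    rw [ha_def, div_le_div_iff₀ (by positivity) (by norm_num)]
    nlinarith
  have ha2 : a < π/2 := lt_of_le_of_lt ha4 (by linarith)
  -- continuity
  have hsin : ∀ θ ∈ Set.Icc a (π/2), Real.sin θ ≠ 0 := by
    intro θ hθ
    exact (Real.sin_pos_of_pos_of_lt_pi (lt_of_lt_of_le ha hθ.1)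
      (lt_of_le_of_lt hθ.2 (by linarith))).ne'
  have hcont : ContinuousOn Fth (Set.Icc a (π/2)) := by
    apply ContinuousOn.mul
    · exact (((continuousOn_const.sub (continuousOn_const.mul continuousOn_id)).div
        Real.continuous_sin.continuousOn hsin).pow 2)
    · exact Real.continuous_exp.comp_continuousOn
        (((continuousOn_const.sub (continuousOn_const.mul continuousOn_id)).mul
          Real.continuous_cos.continuousOn).div Real.continuous_sin.continuousOn hsin)
  have hF_half : Fth (π/2) = 0 := by
    simp [Fth]
    ring
  have hFa : (n:ℝ)^2 ≤ Fth a := by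
    have hsa : 0 < Real.sin a := Real.sin_pos_of_pos_of_lt_pi ha (by linarith)
    have hca : 0 ≤ Real.cos a := Real.cos_nonneg_of_mem_Icc ⟨by linarith, le_of_lt ha2⟩
    have hya : π/2 ≤ π - 2*a := by linarith
    have hexp1 : 1 ≤ Real.exp ((π - 2*a) * Real.cos a / Real.sin a) := by
      apply Real.one_le_exp
      exact div_nonneg (mul_nonneg (by linarith) hca) hsa.le
    have hsin_le : Real.sin a ≤ a := Real.sin_le ha.le
    have hbase : (n:ℝ) ≤ (π - 2*a) / Real.sin a := by
      have h1 : (n:ℝ) = (π/2) / a := by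
        rw [ha_def]; field_simp
      rw [h1]
      exact div_le_div₀ (by linarith) hya hsa hsin_le
    have : (n:ℝ)^2 ≤ ((π - 2*a) / Real.sin a)^2 :=
      pow_le_pow_left₀ (by positivity) hbase 2
    calc (n:ℝ)^2 = (n:ℝ)^2 * 1 := by ring
      _ ≤ ((π - 2*a) / Real.sin a)^2 * Real.exp ((π - 2*a) * Real.cos a / Real.sin a) :=
          mul_le_mul this hexp1 (by norm_num) (by positivity)
  have hsub := intermediate_value_Icc' (le_of_lt ha2) hcont
  have hmem : (n:ℝ)^2 ∈ Set.Icc (Fth (π/2)) (Fth a) := by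
    constructor
    · rw [hF_half]; positivity
    · exact hFa
  obtain ⟨θ, hθmem, hθeq⟩ := hsub hmem
  refine ⟨θ, lt_of_lt_of_le ha hθmem.1, ?_, hθeq⟩
  rcases lt_or_eq_of_le hθmem.2 with h | h
  · exact h
  · exfalso
    rw [h, hF_half] at hθeq
    have : (0:ℝ) < (n:ℝ)^2 := by positivity
    linarith [hθeq]

lemma root_of_theta {θ x y : ℝ} (h1 : 0 < θ) (h2 : θ < π/2)
    (hy : y = π - 2*θ) (hx : x = y * Real.cos θ / Real.sin θ) (c : ℂ)
    (hc : c = (Fth θ : ℂ)) :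
    ((x:ℂ) + (y:ℂ)*Complex.I)^2 + c * Complex.exp (-((x:ℂ) + (y:ℂ)*Complex.I)) = 0 := by
  have hπ := Real.pi_pos
  have hs : 0 < Real.sin θ := Real.sin_pos_of_pos_of_lt_pi h1 (by linarith)
  have hsne : (Real.sin θ : ℂ) ≠ 0 := by exact_mod_cast hs.ne'
  set E : ℂ := Complex.exp (θ * Complex.I) with hE_def
  have hE : E = (Real.cos θ : ℂ) + (Real.sin θ : ℂ) * Complex.I := by
    rw [hE_def, Complex.exp_mul_I, Complex.ofReal_cos, Complex.ofReal_sin]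
  have hlam : (x:ℂ) + (y:ℂ)*Complex.I = ((y:ℂ)/(Real.sin θ : ℂ)) * E := by
    have hsne2 : Complex.sin (θ:ℂ) ≠ 0 := by
      rw [← Complex.ofReal_sin]; exact_mod_cast hs.ne'
    rw [hE, hx, Complex.ofReal_div, Complex.ofReal_mul]
    field_simp [hsne2]
  have hexpy : Complex.exp (-((x:ℂ) + (y:ℂ)*Complex.I))
      = -Complex.exp (-(x:ℂ)) * E^2 := by
    have harg : -((x:ℂ) + (y:ℂ)*Complex.I)
        = -(x:ℂ) + (θ*Complex.I + θ*Complex.I + -(↑π*Complex.I)) := by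
      rw [hy]; push_cast; ring
    rw [harg, Complex.exp_add, Complex.exp_add, Complex.exp_add,
      Complex.exp_neg ((π:ℂ)*Complex.I), Complex.exp_pi_mul_I, ← hE_def]
    simp only [inv_neg, inv_one]
    ring
  have hFc : c = ((y:ℂ)/(Real.sin θ : ℂ))^2 * Complex.exp (x:ℂ) := by
    rw [hc]
    unfold Fth
    rw [hx, hy]
    push_cast [Complex.ofReal_exp]
    ring
  rw [hexpy, hFc, hlam]
  have hxx : Complex.exp (x:ℂ) * Complex.exp (-(x:ℂ)) = 1 := by
    rw [← Complex.exp_add]; simp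
  linear_combination (-(((y:ℝ):ℂ)/(Real.sin θ : ℂ))^2 * E^2) * hxx

theorem stmt2 :
    ∃ (N : ℕ) (lam : ℕ → ℂ),
      (∀ n : ℕ, N ≤ n → (lam n)^2 + (n : ℂ)^2 * Complex.exp (-(lam n)) = 0) ∧
      Filter.Tendsto (fun n : ℕ => (lam n).re) Filter.atTop Filter.atTop ∧
      Filter.Tendsto
        (fun n : ℕ => (lam n).re /
          (2 * (Real.log ((n : ℝ)/2) - Real.log (Real.log ((n : ℝ)/2)))))
        Filter.atTop (nhds 1) := by
  classical
  have hπ := Real.pi_pos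
  have key : ∀ n : ℕ, ∃ θ : ℝ, 2 ≤ n → (0 < θ ∧ θ < π/2 ∧ Fth θ = (n:ℝ)^2) := by
    intro n
    by_cases h : 2 ≤ n
    · obtain ⟨θ, hθ⟩ := exists_theta n h
      exact ⟨θ, fun _ => hθ⟩
    · exact ⟨1, fun h' => absurd h' h⟩
  choose tf htf using key
  set Y : ℕ → ℝ := fun n => π - 2 * tf n with hYdef
  set X : ℕ → ℝ := fun n => Y n * Real.cos (tf n) / Real.sin (tf n) with hXdef
  -- basic facts
  have habs : ∀ n : ℕ, 2 ≤ n →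
      (X n^2 + Y n^2) * Real.exp (X n) = (n:ℝ)^2 ∧ 0 < X n ∧ 0 < Y n ∧ Y n < π := by
    intro n hn
    obtain ⟨h1, h2, h3⟩ := htf n hn
    have hs : 0 < Real.sin (tf n) := Real.sin_pos_of_pos_of_lt_pi h1 (by linarith)
    have hco : 0 < Real.cos (tf n) := Real.cos_pos_of_mem_Ioo ⟨by linarith, h2⟩
    have hy : 0 < Y n := by rw [hYdef]; simp; linarith
    have hyπ : Y n < π := by rw [hYdef]; simp; linarith
    have hx : 0 < X n := by
      rw [hXdef]; exact div_pos (mul_pos hy hco) hs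
    have hpyth := Real.sin_sq_add_cos_sq (tf n)
    have hid : X n^2 + Y n^2 = (Y n / Real.sin (tf n))^2 := by
      rw [hXdef]
      field_simp
      nlinarith [hpyth]
    have hFeq : (X n^2 + Y n^2) * Real.exp (X n) = Fth (tf n) := by
      rw [hid]
      unfold Fth
      rw [hXdef, hYdef]
    rw [hFeq, h3]
    exact ⟨rfl, hx, hy, hyπ⟩
  have hlog : ∀ n : ℕ, 2 ≤ n →
      2 * Real.log n = X n + Real.log (X n^2 + Y n^2) := by
    intro n hn
    obtain ⟨heq, hx, hy, hyπ⟩ := habs n hn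
    have hne : X n^2 + Y n^2 ≠ 0 := by positivity
    have h1 : Real.log ((X n^2 + Y n^2) * Real.exp (X n))
        = Real.log (X n^2 + Y n^2) + X n := by
      rw [Real.log_mul hne (Real.exp_ne_zero _), Real.log_exp]
    rw [heq] at h1
    have h2 : Real.log ((n:ℝ)^2) = 2 * Real.log n := by
      rw [Real.log_pow]; push_cast; ring
    linarith [h1, h2]
  -- X tends to infinity
  have hXtop : Filter.Tendsto X Filter.atTop Filter.atTop := by
    rw [tendsto_atTop]
    intro b
    set M : ℝ := max b 0 with hM
    have hM0 : 0 ≤ M := le_max_right _ _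
    have hsq : Filter.Tendsto (fun n : ℕ => (n:ℝ)^2) Filter.atTop Filter.atTop :=
      (tendsto_pow_atTop two_ne_zero).comp tendsto_natCast_atTop_atTop
    filter_upwards [hsq.eventually_gt_atTop ((M^2 + π^2) * Real.exp M),
      eventually_ge_atTop 2] with n hgt hn2
    obtain ⟨heq, hx, hy, hyπ⟩ := habs n hn2
    by_contra hcon
    push_neg at hcon
    have hXM : X n < M := lt_of_lt_of_le hcon (le_max_left _ _)
    have hb1 : X n^2 + Y n^2 ≤ M^2 + π^2 := by nlinarith
    have hb2 : Real.exp (X n) ≤ Real.exp M := Real.exp_le_exp.2 hXM.le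
    have : (n:ℝ)^2 ≤ (M^2 + π^2) * Real.exp M := by
      rw [← heq]
      have := mul_le_mul hb1 hb2 (Real.exp_pos _).le (by positivity)
      linarith
    linarith
  refine ⟨2, fun n => (X n : ℂ) + (Y n : ℂ) * Complex.I, ?_, ?_, ?_⟩
  · intro n hn
    obtain ⟨h1, h2, h3⟩ := htf n hn
    have hcast : ((n:ℂ))^2 = ((Fth (tf n) : ℝ) : ℂ) := by
      rw [h3]; push_cast; ring
    exact root_of_theta h1 h2 rfl rfl ((n:ℂ)^2) hcast
  · apply hXtop.congr
    intro n
    simp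
  · -- asymptotics
    have hlogtop : Filter.Tendsto (fun n : ℕ => Real.log n) Filter.atTop Filter.atTop :=
      Real.tendsto_log_atTop.comp tendsto_natCast_atTop_atTop
    have hlogdiv : Filter.Tendsto (fun t : ℝ => Real.log t / t) Filter.atTop (nhds 0) :=
      Real.isLittleO_log_id_atTop.tendsto_div_nhds_zero
    -- the error term
    have hr0 : Filter.Tendsto
        (fun n : ℕ => Real.log (X n^2 + Y n^2) / (2 * Real.log n))
        Filter.atTop (nhds 0) := by
      have hg : Filter.Tendsto (fun n : ℕ => (Real.log 2 + 2 * Real.log (X n)) / X n)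
          Filter.atTop (nhds 0) := by
        have houter : Filter.Tendsto (fun t : ℝ => (Real.log 2 + 2 * Real.log t) / t)
            Filter.atTop (nhds 0) := by
          have h1 : Filter.Tendsto (fun t : ℝ => Real.log 2 / t + 2 * (Real.log t / t))
              Filter.atTop (nhds 0) := by
            have hc : Filter.Tendsto (fun t : ℝ => Real.log 2 / t) Filter.atTop (nhds 0) :=
              (tendsto_const_nhds : Filter.Tendsto (fun _ : ℝ => Real.log 2)
                Filter.atTop (nhds (Real.log 2))).div_atTop tendsto_id
            have := hc.add (hlogdiv.const_mul 2)
            simpa using this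
          apply h1.congr
          intro t
          rw [mul_div_assoc', ← add_div]
        exact (houter.comp hXtop).congr (fun n => rfl)
      apply squeeze_zero'
      · filter_upwards [eventually_ge_atTop 2, hXtop.eventually_ge_atTop 1] with n hn2 h1X
        obtain ⟨heq, hx, hy, hyπ⟩ := habs n hn2
        have hlogn := hlog n hn2
        have hL0 : 0 ≤ Real.log (X n^2 + Y n^2) := Real.log_nonneg (by nlinarith)
        have hden : 0 < 2 * Real.log n := by linarith
        positivity
      · filter_upwards [eventually_ge_atTop 2, hXtop.eventually_ge_atTop 1,
          hXtop.eventually_ge_atTop π] with n hn2 h1X hπX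
        obtain ⟨heq, hx, hy, hyπ⟩ := habs n hn2
        have hlogn := hlog n hn2
        have hL0 : 0 ≤ Real.log (X n^2 + Y n^2) := Real.log_nonneg (by nlinarith)
        have hnum : Real.log (X n^2 + Y n^2) ≤ Real.log 2 + 2 * Real.log (X n) := by
          have h1 : X n^2 + Y n^2 ≤ 2 * X n^2 := by nlinarith
          have h2 : Real.log (X n^2 + Y n^2) ≤ Real.log (2 * X n^2) :=
            Real.log_le_log (by positivity) h1
          have h3 : Real.log (2 * X n^2) = Real.log 2 + 2 * Real.log (X n) := by
            rw [Real.log_mul (by norm_num) (by positivity), Real.log_pow]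
            push_cast; ring
          linarith
        have hden : X n ≤ 2 * Real.log n := by linarith
        have hnum0 : 0 ≤ Real.log 2 + 2 * Real.log (X n) := by
          have := Real.log_nonneg h1X
          have := Real.log_nonneg (by norm_num : (1:ℝ) ≤ 2)
          linarith
        exact div_le_div₀ hnum0 hnum hx hden
      · exact hg
    -- X n / (2 log n) → 1
    have hx1 : Filter.Tendsto (fun n : ℕ => X n / (2 * Real.log n))
        Filter.atTop (nhds 1) := by
      apply Filter.Tendsto.congr' _ (by simpa using (tendsto_const_nhds : Filter.Tendsto (fun _ : ℕ => (1:ℝ)) Filter.atTop (nhds 1)).sub hr0)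
      filter_upwards [eventually_ge_atTop 2, hXtop.eventually_ge_atTop 1] with n hn2 h1X
      obtain ⟨heq, hx, hy, hyπ⟩ := habs n hn2
      have hlogn := hlog n hn2
      have hL0 : 0 ≤ Real.log (X n^2 + Y n^2) := Real.log_nonneg (by nlinarith)
      have hden : (0:ℝ) < 2 * Real.log n := by linarith
      have hlogn0 : Real.log n ≠ 0 := (by linarith : 0 < Real.log n).ne'
      field_simp
      linarith
    -- D n / (2 log n) → 1
    have hhalf : Filter.Tendsto (fun n : ℕ => (n:ℝ)/2) Filter.atTop Filter.atTop :=
      tendsto_natCast_atTop_atTop.atTop_div_const two_pos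
    have hloghalf : Filter.Tendsto (fun n : ℕ => Real.log ((n:ℝ)/2))
        Filter.atTop Filter.atTop := Real.tendsto_log_atTop.comp hhalf
    have hA : Filter.Tendsto (fun n : ℕ => Real.log ((n:ℝ)/2) / Real.log n)
        Filter.atTop (nhds 1) := by
      have h2 : Filter.Tendsto (fun n : ℕ => Real.log 2 / Real.log n)
          Filter.atTop (nhds 0) := tendsto_const_nhds.div_atTop hlogtop
      apply Filter.Tendsto.congr' _ (by simpa using (tendsto_const_nhds : Filter.Tendsto (fun _ : ℕ => (1:ℝ)) Filter.atTop (nhds 1)).sub h2)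
      filter_upwards [eventually_ge_atTop 2] with n hn2
      have hn1 : (1:ℝ) < (n:ℝ) := by exact_mod_cast lt_of_lt_of_le one_lt_two hn2
      have hlogn_pos : 0 < Real.log n := Real.log_pos hn1
      have hdiv : Real.log ((n:ℝ)/2) = Real.log n - Real.log 2 :=
        Real.log_div (by positivity) (by norm_num)
      rw [hdiv, sub_div, div_self hlogn_pos.ne']
    have hB : Filter.Tendsto
        (fun n : ℕ => Real.log (Real.log ((n:ℝ)/2)) / Real.log ((n:ℝ)/2))
        Filter.atTop (nhds 0) := (hlogdiv.comp hloghalf).congr (fun n => rfl)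
    have hD : Filter.Tendsto
        (fun n : ℕ => (2 * (Real.log ((n:ℝ)/2) - Real.log (Real.log ((n:ℝ)/2))))
          / (2 * Real.log n)) Filter.atTop (nhds 1) := by
      apply Filter.Tendsto.congr' _ (by simpa using hA.sub (hB.mul hA))
      filter_upwards [eventually_ge_atTop 3] with n hn3
      have hn1 : (1:ℝ) < (n:ℝ)/2 := by
        have : (3:ℝ) ≤ (n:ℝ) := by exact_mod_cast hn3
        linarith
      have hl2 : 0 < Real.log ((n:ℝ)/2) := Real.log_pos hn1
      have hlogn_pos : 0 < Real.log n := Real.log_pos (by linarith)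
      field_simp
    -- combine
    have hdivlem : ∀ a b c : ℝ, c ≠ 0 → a / c / (b / c) = a / b := by
      intro a b c hc
      rcases eq_or_ne b 0 with rfl | hb
      · simp
      · field_simp
    have hfin := hx1.div hD one_ne_zero
    apply Filter.Tendsto.congr' _ (by simpa using hfin)
    filter_upwards [eventually_ge_atTop 2] with n hn2
    have hn1 : (1:ℝ) < (n:ℝ) := by exact_mod_cast lt_of_lt_of_le one_lt_two hn2
    have hlogn_pos : 0 < Real.log n := Real.log_pos hn1
    have hre : ((X n : ℂ) + (Y n : ℂ) * Complex.I).re = X n := by simp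
    simp only [Pi.div_apply]
    rw [hdivlem _ _ _ (by positivity : (2 * Real.log n) ≠ 0), hre]
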